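/- arXiv:0906.2034 — 2 statements merged into one kernel-verified Lean document; each statement's English description precedes it below -/
import Mathlib

section
/- The Soft-Impute map is non-expansive in the successive-differences sense: for the iterates Z^{k+1} = S_λ(P_Ω(X) + P_Ω^⊥(Z^k)), one has ‖Z^{k+1} − Z^k‖_F² ≤ ‖P_Ω^⊥(Z^k − Z^{k−1})‖_F² ≤ ‖Z^k − Z^{k−1}‖_F² for all k ≥ 1. -/
open Matrix BigOperators Finset

noncomputable section

/-- Squared Frobenius norm of a real matrix. -/
def frobSq {m n : ℕ} (A : Matrix (Fin m) (Fin n) ℝ) : ℝ :=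
  ∑ i, ∑ j, (A i j) ^ 2

/-- Frobenius norm. -/
def frobNorm {m n : ℕ} (A : Matrix (Fin m) (Fin n) ℝ) : ℝ :=
  Real.sqrt (frobSq A)

/-- The singular values of `A`, as square roots of the eigenvalues of `Aᴴ * A`. -/
def singVals {m n : ℕ} (A : Matrix (Fin m) (Fin n) ℝ) : Fin n → ℝ :=
  fun i => Real.sqrt ((show (Aᵀ * A).IsHermitian by
    simpa using Matrix.isHermitian_conjTranspose_mul_self A).eigenvalues i)

/-- Nuclear norm: the sum of the singular values. -/
def nnorm {m n : ℕ} (A : Matrix (Fin m) (Fin n) ℝ) : ℝ :=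
  ∑ i, singVals A i

/-- Spectral norm: the largest singular value. -/
def specNorm {m n : ℕ} (A : Matrix (Fin m) (Fin n) ℝ) : ℝ :=
  ⨆ i, singVals A i

/-- Projection onto the observed entries `Ω`. -/
def pO {m n : ℕ} (Ω : Finset (Fin m × Fin n)) (Y : Matrix (Fin m) (Fin n) ℝ) :
    Matrix (Fin m) (Fin n) ℝ :=
  fun i j => if (i, j) ∈ Ω then Y i j else 0

/-- Complementary projection `P_Ω^⊥ = I - P_Ω`. -/
def pOc {m n : ℕ} (Ω : Finset (Fin m × Fin n)) (Y : Matrix (Fin m) (Fin n) ℝ) :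
    Matrix (Fin m) (Fin n) ℝ :=
  Y - pO Ω Y

/-- The objective `f_λ(Z) = ½‖P_Ω(Z) - P_Ω(X)‖_F² + λ‖Z‖_*`. -/
def fObj {m n : ℕ} (Ω : Finset (Fin m × Fin n)) (X : Matrix (Fin m) (Fin n) ℝ) (lam : ℝ)
    (Z : Matrix (Fin m) (Fin n) ℝ) : ℝ :=
  (1 / 2) * frobSq (pO Ω Z - pO Ω X) + lam * nnorm Z

/-- The surrogate `Q_λ(Z | Z̃) = ½‖P_Ω(X) + P_Ω^⊥(Z̃) - Z‖_F² + λ‖Z‖_*`. -/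
def qObj {m n : ℕ} (Ω : Finset (Fin m × Fin n)) (X : Matrix (Fin m) (Fin n) ℝ) (lam : ℝ)
    (Z Zt : Matrix (Fin m) (Fin n) ℝ) : ℝ :=
  (1 / 2) * frobSq (pO Ω X + pOc Ω Zt - Z) + lam * nnorm Z

/-- `IsSVD W U d V` : `W = U D Vᵀ` is a thin SVD of `W` with strictly positive
singular values `d` and orthonormal columns in `U` and `V`. -/
def IsSVD {m n r : ℕ} (W : Matrix (Fin m) (Fin n) ℝ) (U : Matrix (Fin m) (Fin r) ℝ)
    (d : Fin r → ℝ) (V : Matrix (Fin n) (Fin r) ℝ) : Prop :=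
  Uᵀ * U = 1 ∧ Vᵀ * V = 1 ∧ (∀ i, 0 < d i) ∧ W = U * Matrix.diagonal d * Vᵀ

/-- Trace inner product `⟨A, B⟩ = tr(AᵀB)`. -/
def minner {m n : ℕ} (A B : Matrix (Fin m) (Fin n) ℝ) : ℝ :=
  ∑ i, ∑ j, A i j * B i j

/-- `G` is a subgradient of the nuclear norm at `Z`. -/
def NucSubgrad {m n : ℕ} (Z G : Matrix (Fin m) (Fin n) ℝ) : Prop :=
  ∀ Y, nnorm Z + minner G (Y - Z) ≤ nnorm Y

end

section Helpers

lemma frobSq_nonneg {m n : ℕ} (A : Matrix (Fin m) (Fin n) ℝ) : 0 ≤ frobSq A := by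
  unfold frobSq; positivity

lemma minner_self {m n : ℕ} (A : Matrix (Fin m) (Fin n) ℝ) : minner A A = frobSq A := by
  simp [minner, frobSq, sq]

lemma minner_comm {m n : ℕ} (A B : Matrix (Fin m) (Fin n) ℝ) : minner A B = minner B A := by
  simp only [minner, mul_comm]

lemma minner_sub_left {m n : ℕ} (A B C : Matrix (Fin m) (Fin n) ℝ) :
    minner (A - B) C = minner A C - minner B C := by
  simp [minner, Matrix.sub_apply, sub_mul, Finset.sum_sub_distrib]

lemma minner_sub_right {m n : ℕ} (A B C : Matrix (Fin m) (Fin n) ℝ) :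
    minner A (B - C) = minner A B - minner A C := by
  simp [minner, Matrix.sub_apply, mul_sub, Finset.sum_sub_distrib]

lemma minner_add_right {m n : ℕ} (A B C : Matrix (Fin m) (Fin n) ℝ) :
    minner A (B + C) = minner A B + minner A C := by
  simp [minner, Matrix.add_apply, mul_add, Finset.sum_add_distrib]

lemma minner_cauchy {m n : ℕ} (A B : Matrix (Fin m) (Fin n) ℝ) :
    (minner A B) ^ 2 ≤ frobSq A * frobSq B := by
  have e1 : minner A B = ∑ p : Fin m × Fin n, A p.1 p.2 * B p.1 p.2 :=
    (Fintype.sum_prod_type (f := fun p : Fin m × Fin n => A p.1 p.2 * B p.1 p.2)).symm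
  have e2 : frobSq A = ∑ p : Fin m × Fin n, A p.1 p.2 ^ 2 :=
    (Fintype.sum_prod_type (f := fun p : Fin m × Fin n => A p.1 p.2 ^ 2)).symm
  have e3 : frobSq B = ∑ p : Fin m × Fin n, B p.1 p.2 ^ 2 :=
    (Fintype.sum_prod_type (f := fun p : Fin m × Fin n => B p.1 p.2 ^ 2)).symm
  rw [e1, e2, e3]
  exact Finset.sum_mul_sq_le_sq_mul_sq Finset.univ _ _

lemma minner_eq_trace {m n : ℕ} (A B : Matrix (Fin m) (Fin n) ℝ) :
    minner A B = Matrix.trace (Aᵀ * B) := by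
  unfold minner Matrix.trace
  simp only [Matrix.diag, Matrix.mul_apply, Matrix.transpose_apply]
  rw [Finset.sum_comm]

lemma minner_svd {m n r₁ r₂ : ℕ} (U₁ : Matrix (Fin m) (Fin r₁) ℝ) (V₁ : Matrix (Fin n) (Fin r₁) ℝ)
    (U₂ : Matrix (Fin m) (Fin r₂) ℝ) (V₂ : Matrix (Fin n) (Fin r₂) ℝ)
    (e : Fin r₁ → ℝ) (c : Fin r₂ → ℝ) :
    minner (U₁ * Matrix.diagonal e * V₁ᵀ) (U₂ * Matrix.diagonal c * V₂ᵀ)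
      = ∑ i, ∑ j, e i * c j * ((U₁ᵀ * U₂) i j) * ((V₁ᵀ * V₂) i j) := by
  rw [minner_eq_trace]
  have h1 : (U₁ * Matrix.diagonal e * V₁ᵀ)ᵀ * (U₂ * Matrix.diagonal c * V₂ᵀ)
      = V₁ * (Matrix.diagonal e * ((U₁ᵀ * U₂) * (Matrix.diagonal c * V₂ᵀ))) := by
    simp only [Matrix.transpose_mul, Matrix.transpose_transpose, Matrix.diagonal_transpose,
      Matrix.mul_assoc]
  rw [h1, Matrix.trace_mul_comm]
  have h2 : Matrix.diagonal e * ((U₁ᵀ * U₂) * (Matrix.diagonal c * V₂ᵀ)) * V₁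
      = Matrix.diagonal e * ((U₁ᵀ * U₂) * (Matrix.diagonal c * (V₂ᵀ * V₁))) := by
    simp only [Matrix.mul_assoc]
  rw [h2]
  have h3 : ∀ i j, (V₂ᵀ * V₁) j i = (V₁ᵀ * V₂) i j := by
    intro i j; simp [Matrix.mul_apply, mul_comm]
  have h4 : ∀ i, (Matrix.diagonal e * ((U₁ᵀ * U₂) * (Matrix.diagonal c * (V₂ᵀ * V₁)))) i i
      = ∑ j, e i * c j * ((U₁ᵀ * U₂) i j) * ((V₁ᵀ * V₂) i j) := by
    intro i
    rw [Matrix.diagonal_mul, Matrix.mul_apply, Finset.mul_sum]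
    refine Finset.sum_congr rfl fun j _ => ?_
    rw [Matrix.diagonal_mul, h3]; ring
  unfold Matrix.trace
  simp only [Matrix.diag]
  exact Finset.sum_congr rfl fun i _ => h4 i

lemma diag_posSemidef {p q : ℕ} (L : Matrix (Fin p) (Fin q) ℝ) (j : Fin q) :
    0 ≤ (Lᵀ * L) j j := by
  rw [Matrix.mul_apply]
  apply Finset.sum_nonneg
  intro a _
  rw [Matrix.transpose_apply]
  exact mul_self_nonneg _

lemma col_bound {m r₁ r₂ : ℕ} (U₁ : Matrix (Fin m) (Fin r₁) ℝ) (U₂ : Matrix (Fin m) (Fin r₂) ℝ)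
    (h₁ : U₁ᵀ * U₁ = 1) (h₂ : U₂ᵀ * U₂ = 1) (j : Fin r₂) :
    ∑ i, ((U₁ᵀ * U₂) i j) ^ 2 ≤ 1 := by
  set K := U₁ᵀ * U₂ with hK
  have hKt : Kᵀ = U₂ᵀ * U₁ := by rw [hK, Matrix.transpose_mul, Matrix.transpose_transpose]
  have hsum : ∑ i, (K i j) ^ 2 = (Kᵀ * K) j j := by
    rw [Matrix.mul_apply]
    refine Finset.sum_congr rfl fun i _ => ?_
    rw [Matrix.transpose_apply, sq]
  have hL : (U₂ - U₁ * K)ᵀ * (U₂ - U₁ * K) = U₂ᵀ * U₂ - Kᵀ * K := by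
    rw [Matrix.transpose_sub, Matrix.sub_mul, Matrix.mul_sub, Matrix.mul_sub,
      Matrix.transpose_mul]
    have e1 : U₂ᵀ * (U₁ * K) = K ᵀ * K := by rw [hKt, Matrix.mul_assoc]
    have e2 : Kᵀ * U₁ᵀ * U₂ = Kᵀ * K := by rw [Matrix.mul_assoc, ← hK]
    have e3 : Kᵀ * U₁ᵀ * (U₁ * K) = Kᵀ * K := by
      rw [Matrix.mul_assoc, ← Matrix.mul_assoc U₁ᵀ, h₁, Matrix.one_mul]
    rw [e1, e2, e3]
    abel
  have hpos := diag_posSemidef (U₂ - U₁ * K) j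
  rw [hL, Matrix.sub_apply, h₂] at hpos
  rw [hsum]
  have : (1 : Matrix (Fin r₂) (Fin r₂) ℝ) j j = 1 := by simp [Matrix.one_apply]
  linarith [hpos, this.le, this.ge]

lemma key_ineq {m n r₁ r₂ : ℕ} (lam : ℝ) (hlam : 0 ≤ lam)
    (U₁ : Matrix (Fin m) (Fin r₁) ℝ) (V₁ : Matrix (Fin n) (Fin r₁) ℝ)
    (U₂ : Matrix (Fin m) (Fin r₂) ℝ) (V₂ : Matrix (Fin n) (Fin r₂) ℝ)
    (hU₁ : U₁ᵀ * U₁ = 1) (hV₁ : V₁ᵀ * V₁ = 1) (hU₂ : U₂ᵀ * U₂ = 1) (hV₂ : V₂ᵀ * V₂ = 1)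
    (e : Fin r₁ → ℝ) (c : Fin r₂ → ℝ) (he0 : ∀ i, 0 ≤ e i) (heL : ∀ i, e i ≤ lam)
    (hc : ∀ j, 0 ≤ c j) :
    minner (U₁ * Matrix.diagonal e * V₁ᵀ) (U₂ * Matrix.diagonal c * V₂ᵀ) ≤ lam * ∑ j, c j := by
  rw [minner_svd, Finset.sum_comm, Finset.mul_sum]
  apply Finset.sum_le_sum
  intro j _
  set P := U₁ᵀ * U₂
  set Q := V₁ᵀ * V₂
  have hP := col_bound U₁ U₂ hU₁ hU₂ j
  have hQ := col_bound V₁ V₂ hV₁ hV₂ j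
  have step1 : ∀ i, e i * c j * P i j * Q i j
      ≤ c j * (lam / 2 * ((P i j) ^ 2 + (Q i j) ^ 2)) := by
    intro i
    have h2 : e i * (P i j * Q i j) ≤ e i * (((P i j) ^ 2 + (Q i j) ^ 2) / 2) := by
      rcases le_or_gt (P i j * Q i j) 0 with h | h
      · nlinarith [he0 i, heL i, sq_nonneg (P i j + Q i j)]
      · nlinarith [he0 i, sq_nonneg (P i j - Q i j)]
    have h3 : e i * (((P i j) ^ 2 + (Q i j) ^ 2) / 2)
        ≤ lam * (((P i j) ^ 2 + (Q i j) ^ 2) / 2) := by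
      have hnn : (0:ℝ) ≤ ((P i j) ^ 2 + (Q i j) ^ 2) / 2 := by positivity
      exact mul_le_mul_of_nonneg_right (heL i) hnn
    calc e i * c j * P i j * Q i j = c j * (e i * (P i j * Q i j)) := by ring
      _ ≤ c j * (e i * (((P i j) ^ 2 + (Q i j) ^ 2) / 2)) :=
          mul_le_mul_of_nonneg_left h2 (hc j)
      _ ≤ c j * (lam * (((P i j) ^ 2 + (Q i j) ^ 2) / 2)) :=
          mul_le_mul_of_nonneg_left h3 (hc j)
      _ = c j * (lam / 2 * ((P i j) ^ 2 + (Q i j) ^ 2)) := by ring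
  calc ∑ i, e i * c j * P i j * Q i j
      ≤ ∑ i, c j * (lam / 2 * ((P i j) ^ 2 + (Q i j) ^ 2)) := Finset.sum_le_sum fun i _ => step1 i
    _ = c j * (lam / 2 * (∑ i, (P i j) ^ 2 + ∑ i, (Q i j) ^ 2)) := by
        rw [← Finset.mul_sum, ← Finset.sum_add_distrib, ← Finset.mul_sum]
    _ ≤ c j * (lam / 2 * 2) := by
        apply mul_le_mul_of_nonneg_left _ (hc j)
        apply mul_le_mul_of_nonneg_left _ (by positivity)
        linarith
    _ = lam * c j := by ring

lemma minner_same {m n r : ℕ} (U : Matrix (Fin m) (Fin r) ℝ) (V : Matrix (Fin n) (Fin r) ℝ)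
    (hU : Uᵀ * U = 1) (hV : Vᵀ * V = 1) (a b : Fin r → ℝ) :
    minner (U * Matrix.diagonal a * Vᵀ) (U * Matrix.diagonal b * Vᵀ) = ∑ i, a i * b i := by
  rw [minner_svd, hU, hV]
  simp [Matrix.one_apply]

lemma pOc_sub {m n : ℕ} (Ω : Finset (Fin m × Fin n)) (Y W : Matrix (Fin m) (Fin n) ℝ) :
    pOc Ω (Y - W) = pOc Ω Y - pOc Ω W := by
  funext i j
  simp only [pOc, pO, Matrix.sub_apply]
  split_ifs <;> ring

lemma frobSq_pOc_le {m n : ℕ} (Ω : Finset (Fin m × Fin n)) (W : Matrix (Fin m) (Fin n) ℝ) :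
    frobSq (pOc Ω W) ≤ frobSq W := by
  unfold frobSq
  refine Finset.sum_le_sum fun i _ => Finset.sum_le_sum fun j _ => ?_
  simp only [pOc, pO, Matrix.sub_apply]
  split_ifs with h
  · simpa using sq_nonneg (W i j)
  · simp

lemma resid_eq {m n r : ℕ} (W S : Matrix (Fin m) (Fin n) ℝ) (U : Matrix (Fin m) (Fin r) ℝ)
    (V : Matrix (Fin n) (Fin r) ℝ) (d : Fin r → ℝ) (lam : ℝ) (hlam : 0 ≤ lam)
    (hW : W = U * Matrix.diagonal d * Vᵀ)
    (hS : S = U * Matrix.diagonal (fun i => max (d i - lam) 0) * Vᵀ) :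
    W - S = U * Matrix.diagonal (fun i => min (d i) lam) * Vᵀ := by
  rw [hW, hS, ← Matrix.sub_mul, ← Matrix.mul_sub, Matrix.diagonal_sub]
  have hfun : (fun i => d i - max (d i - lam) 0) = fun i => min (d i) lam := by
    funext i
    rcases le_total (d i) lam with h | h
    · rw [max_eq_right (by linarith : d i - lam ≤ 0), min_eq_left h, sub_zero]
    · rw [max_eq_left (by linarith : 0 ≤ d i - lam), min_eq_right h]
      ring
  rw [hfun]

end Helpers

/-- the Soft-Impute map is non-expansive in the
successive-differences sense. -/
theorem soft_impute_successive_differences {m n : ℕ} (Ω : Finset (Fin m × Fin n))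
    (X : Matrix (Fin m) (Fin n) ℝ) (lam : ℝ) (hlam : 0 ≤ lam)
    (Z : ℕ → Matrix (Fin m) (Fin n) ℝ)
    (hiter : ∀ k, ∃ (r : ℕ) (U : Matrix (Fin m) (Fin r) ℝ) (d : Fin r → ℝ)
        (V : Matrix (Fin n) (Fin r) ℝ),
      IsSVD (pO Ω X + pOc Ω (Z k)) U d V ∧
      Z (k + 1) = U * Matrix.diagonal (fun i => max (d i - lam) 0) * Vᵀ) :
    ∀ k : ℕ, 1 ≤ k →
      frobSq (Z (k + 1) - Z k) ≤ frobSq (pOc Ω (Z k - Z (k - 1))) ∧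
      frobSq (pOc Ω (Z k - Z (k - 1))) ≤ frobSq (Z k - Z (k - 1)) := by
  intro k hk
  obtain ⟨r, U, d, V, ⟨hU, hV, hd, hA⟩, hZ1⟩ := hiter k
  obtain ⟨r', U', d', V', ⟨hU', hV', hd', hB⟩, hZ0⟩ := hiter (k - 1)
  have hk1 : k - 1 + 1 = k := Nat.succ_pred_eq_of_pos hk
  rw [hk1] at hZ0
  have hRA : (pO Ω X + pOc Ω (Z k)) - Z (k + 1)
      = U * Matrix.diagonal (fun i => min (d i) lam) * Vᵀ :=
    resid_eq _ _ U V d lam hlam hA hZ1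
  have hRB : (pO Ω X + pOc Ω (Z (k - 1))) - Z k
      = U' * Matrix.diagonal (fun i => min (d' i) lam) * V'ᵀ :=
    resid_eq _ _ U' V' d' lam hlam hB hZ0
  have hdiagprod : ∀ (x : ℝ), max (x - lam) 0 * min x lam = lam * max (x - lam) 0 := by
    intro x
    rcases le_total x lam with h | h
    · rw [max_eq_right (by linarith : x - lam ≤ 0)]; ring
    · rw [max_eq_left (by linarith : 0 ≤ x - lam), min_eq_right h]; ring
  have mSARA : minner (Z (k + 1)) ((pO Ω X + pOc Ω (Z k)) - Z (k + 1))
      = lam * ∑ i, max (d i - lam) 0 := by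
    rw [hRA, hZ1, minner_same U V hU hV, Finset.mul_sum]
    exact Finset.sum_congr rfl fun i _ => hdiagprod (d i)
  have mSBRB : minner (Z k) ((pO Ω X + pOc Ω (Z (k - 1))) - Z k)
      = lam * ∑ i, max (d' i - lam) 0 := by
    rw [hRB, hZ0, minner_same U' V' hU' hV', Finset.mul_sum]
    exact Finset.sum_congr rfl fun i _ => hdiagprod (d' i)
  have mSARB : minner (Z (k + 1)) ((pO Ω X + pOc Ω (Z (k - 1))) - Z k)
      ≤ lam * ∑ i, max (d i - lam) 0 := by
    rw [minner_comm, hZ1, hRB]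
    exact key_ineq lam hlam U' V' U V hU' hV' hU hV _ _
      (fun i => le_min (hd' i).le hlam) (fun i => min_le_right _ _)
      (fun i => le_max_right _ _)
  have mSBRA : minner (Z k) ((pO Ω X + pOc Ω (Z k)) - Z (k + 1))
      ≤ lam * ∑ i, max (d' i - lam) 0 := by
    rw [minner_comm, hRA, hZ0]
    exact key_ineq lam hlam U V U' V' hU hV hU' hV' _ _
      (fun i => le_min (hd i).le hlam) (fun i => min_le_right _ _)
      (fun i => le_max_right _ _)
  set RA := (pO Ω X + pOc Ω (Z k)) - Z (k + 1) with hRAdef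
  set RB := (pO Ω X + pOc Ω (Z (k - 1))) - Z k with hRBdef
  have hcross : 0 ≤ minner (Z (k + 1) - Z k) (RA - RB) := by
    have e1 := minner_sub_left (Z (k + 1)) (Z k) (RA - RB)
    have e2 := minner_sub_right (Z (k + 1)) RA RB
    have e3 := minner_sub_right (Z k) RA RB
    linarith [e1, e2, e3, mSARA, mSARB, mSBRA, mSBRB]
  have hsplit : (pO Ω X + pOc Ω (Z k)) - (pO Ω X + pOc Ω (Z (k - 1)))
      = (Z (k + 1) - Z k) + (RA - RB) := by
    rw [hRAdef, hRBdef]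
    abel
  have hDE : frobSq (Z (k + 1) - Z k)
      ≤ minner (Z (k + 1) - Z k)
        ((pO Ω X + pOc Ω (Z k)) - (pO Ω X + pOc Ω (Z (k - 1)))) := by
    rw [hsplit]
    have e4 := minner_add_right (Z (k + 1) - Z k) (Z (k + 1) - Z k) (RA - RB)
    have e5 := minner_self (Z (k + 1) - Z k)
    linarith [e4, e5, hcross]
  have hCS := minner_cauchy (Z (k + 1) - Z k)
    ((pO Ω X + pOc Ω (Z k)) - (pO Ω X + pOc Ω (Z (k - 1))))
  have hEeq : (pO Ω X + pOc Ω (Z k)) - (pO Ω X + pOc Ω (Z (k - 1)))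
      = pOc Ω (Z k - Z (k - 1)) := by
    rw [pOc_sub]
    abel
  have h1 : frobSq (Z (k + 1) - Z k)
      ≤ frobSq ((pO Ω X + pOc Ω (Z k)) - (pO Ω X + pOc Ω (Z (k - 1)))) := by
    nlinarith [frobSq_nonneg (Z (k + 1) - Z k),
      frobSq_nonneg ((pO Ω X + pOc Ω (Z k)) - (pO Ω X + pOc Ω (Z (k - 1)))), hDE, hCS]
  rw [hEeq] at h1
  exact ⟨h1, frobSq_pOc_le Ω _⟩
end

section
/- For λ ≥ ‖P_Ω(X)‖₂ (the largest singular value of the projected data matrix), the Soft-Impute solution is Z = 0: the zero matrix minimizes f_λ(Z) = (1/2)‖P_Ω(Z) − P_Ω(X)‖_F² + λ‖Z‖_*. -/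
open Matrix BigOperators Finset

noncomputable section SoftImputeAux

theorem Matrix.isHermitian_transpose_mul_self {m n : ℕ} (A : Matrix (Fin m) (Fin n) ℝ) :
    (Aᵀ * A).IsHermitian := by
  simpa using Matrix.isHermitian_conjTranspose_mul_self A

lemma star_eq_t {n : ℕ} (V : Matrix (Fin n) (Fin n) ℝ) : star V = Vᵀ := by
  simp [Matrix.star_eq_conjTranspose, Matrix.conjTranspose_eq_transpose_of_trivial]

lemma quadform {m n : ℕ} (B : Matrix (Fin m) (Fin n) ℝ) (v : Fin n → ℝ) :
    ∑ j, ((B *ᵥ v) j) ^ 2 = v ⬝ᵥ ((Bᵀ * B) *ᵥ v) := by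
  have h1 : ∑ j, ((B *ᵥ v) j) ^ 2 = (B *ᵥ v) ⬝ᵥ (B *ᵥ v) := by
    simp [dotProduct, pow_two]
  rw [h1, Matrix.dotProduct_mulVec v (Bᵀ * B) v, ← Matrix.vecMul_vecMul,
    Matrix.vecMul_transpose, ← Matrix.dotProduct_mulVec]

lemma diag_spec {k : ℕ} {H : Matrix (Fin k) (Fin k) ℝ} (hH : H.IsHermitian) :
    (hH.eigenvectorUnitary : Matrix (Fin k) (Fin k) ℝ)ᵀ * H *
      (hH.eigenvectorUnitary : Matrix (Fin k) (Fin k) ℝ) = Matrix.diagonal hH.eigenvalues := by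
  have h := hH.conjStarAlgAut_star_eigenvectorUnitary
  rw [Unitary.conjStarAlgAut_apply, Unitary.coe_star, star_star, star_eq_t] at h
  simpa [Function.comp] using h

lemma VtV {k : ℕ} {H : Matrix (Fin k) (Fin k) ℝ} (hH : H.IsHermitian) :
    (hH.eigenvectorUnitary : Matrix (Fin k) (Fin k) ℝ)ᵀ *
      (hH.eigenvectorUnitary : Matrix (Fin k) (Fin k) ℝ) = 1 := by
  have h := Matrix.mem_unitaryGroup_iff'.mp hH.eigenvectorUnitary.2
  rwa [star_eq_t] at h

lemma VVt {k : ℕ} {H : Matrix (Fin k) (Fin k) ℝ} (hH : H.IsHermitian) :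
    (hH.eigenvectorUnitary : Matrix (Fin k) (Fin k) ℝ) *
      (hH.eigenvectorUnitary : Matrix (Fin k) (Fin k) ℝ)ᵀ = 1 := by
  have h := Matrix.mem_unitaryGroup_iff.mp hH.eigenvectorUnitary.2
  rwa [star_eq_t] at h

lemma specNorm_nonneg {m n : ℕ} (A : Matrix (Fin m) (Fin n) ℝ) : 0 ≤ specNorm A :=
  Real.iSup_nonneg fun _ => Real.sqrt_nonneg _

lemma eig_le_spec_sq {m n : ℕ} (A : Matrix (Fin m) (Fin n) ℝ) (i : Fin n) :
    (Matrix.isHermitian_transpose_mul_self A).eigenvalues i ≤ specNorm A ^ 2 := by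
  have h1 : singVals A i ≤ specNorm A :=
    le_ciSup (Set.Finite.bddAbove (Set.finite_range _)) i
  have h2 := Matrix.eigenvalues_conjTranspose_mul_self_nonneg A i
  calc (Matrix.isHermitian_transpose_mul_self A).eigenvalues i
      = (singVals A i) ^ 2 := (Real.sq_sqrt h2).symm
    _ ≤ specNorm A ^ 2 := pow_le_pow_left₀ (Real.sqrt_nonneg _) h1 2

-- quadratic form in column i of V, as matrix entry
lemma quad_col {n : ℕ} (V M : Matrix (Fin n) (Fin n) ℝ) (i : Fin n) :
    (fun k => V k i) ⬝ᵥ (M *ᵥ (fun k => V k i)) = (Vᵀ * M * V) i i := by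
  simp only [dotProduct, Matrix.mulVec, Matrix.mul_apply, Matrix.transpose_apply,
    Finset.mul_sum, Finset.sum_mul]
  calc ∑ x : Fin n, ∑ y : Fin n, V x i * (M x y * V y i)
      = ∑ y : Fin n, ∑ x : Fin n, V x i * (M x y * V y i) := Finset.sum_comm
    _ = ∑ x : Fin n, ∑ y : Fin n, V y i * M y x * V x i :=
        Finset.sum_congr rfl fun a _ => Finset.sum_congr rfl fun b _ => by ring

lemma unit_vec_bound {m n : ℕ} (A : Matrix (Fin m) (Fin n) ℝ) (v : Fin n → ℝ)
    (hv : v ⬝ᵥ v = 1) : ∑ j, ((A *ᵥ v) j) ^ 2 ≤ specNorm A ^ 2 := by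
  set hA := Matrix.isHermitian_transpose_mul_self A
  set W : Matrix (Fin n) (Fin n) ℝ := (hA.eigenvectorUnitary : Matrix (Fin n) (Fin n) ℝ) with hW
  set f := hA.eigenvalues with hf
  have hspec : Aᵀ * A = W * Matrix.diagonal f * Wᵀ := by
    have h := diag_spec hA
    calc Aᵀ * A = (W * Wᵀ) * (Aᵀ * A) * (W * Wᵀ) := by rw [VVt hA]; simp
      _ = W * (Wᵀ * (Aᵀ * A) * W) * Wᵀ := by noncomm_ring
      _ = W * Matrix.diagonal f * Wᵀ := by rw [h]
  rw [quadform, hspec]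
  set w := Wᵀ *ᵥ v with hwdef
  have key : v ⬝ᵥ ((W * Matrix.diagonal f * Wᵀ) *ᵥ v) = ∑ k, f k * (w k) ^ 2 := by
    rw [← Matrix.mulVec_mulVec, ← Matrix.mulVec_mulVec, Matrix.dotProduct_mulVec,
      ← Matrix.mulVec_transpose]
    simp [Matrix.mulVec_diagonal, dotProduct, hwdef]
    exact Finset.sum_congr rfl fun k _ => by ring
  have hw1 : ∑ k, (w k) ^ 2 = 1 := by
    rw [hwdef, quadform Wᵀ v]
    rw [Matrix.transpose_transpose, VVt hA]
    simpa using hv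
  rw [key]
  calc ∑ k, f k * (w k) ^ 2 ≤ ∑ k, specNorm A ^ 2 * (w k) ^ 2 :=
        Finset.sum_le_sum fun k _ =>
          mul_le_mul_of_nonneg_right (eig_le_spec_sq A k) (sq_nonneg _)
    _ = specNorm A ^ 2 := by rw [← Finset.mul_sum, hw1, mul_one]

lemma holder {m n : ℕ} (A Z : Matrix (Fin m) (Fin n) ℝ) :
    minner A Z ≤ specNorm A * nnorm Z := by
  classical
  set hZ := Matrix.isHermitian_transpose_mul_self Z
  set V : Matrix (Fin n) (Fin n) ℝ := (hZ.eigenvectorUnitary : Matrix (Fin n) (Fin n) ℝ) with hV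
  set e := hZ.eigenvalues with he
  set v : Fin n → (Fin n → ℝ) := fun i k => V k i with hv
  have hcol_unit : ∀ i, v i ⬝ᵥ v i = 1 := by
    intro i
    have := congrFun (congrFun (VtV hZ) i) i
    simpa [Matrix.mul_apply, Matrix.one_apply, Matrix.transpose_apply, dotProduct, hv,
      -Matrix.IsHermitian.eigenvectorUnitary_apply]
      using this
  have hdelta : ∀ l k : Fin n, (∑ i, V l i * V k i) = if l = k then (1:ℝ) else 0 := by
    intro l k
    have := congrFun (congrFun (VVt hZ) l) k
    simpa [Matrix.mul_apply, Matrix.one_apply, Matrix.transpose_apply,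
      -Matrix.IsHermitian.eigenvectorUnitary_apply] using this
  -- step 1 : decompose minner along columns of V
  have step1 : minner A Z = ∑ i, (A *ᵥ v i) ⬝ᵥ (Z *ᵥ v i) := by
    have hterm : ∀ i, (A *ᵥ v i) ⬝ᵥ (Z *ᵥ v i)
        = ∑ j, ∑ l, ∑ k, A j l * Z j k * (V l i * V k i) := by
      intro i
      simp only [dotProduct, Matrix.mulVec]
      refine Finset.sum_congr rfl fun j _ => ?_
      rw [Finset.sum_mul_sum]
      exact Finset.sum_congr rfl fun l _ => Finset.sum_congr rfl fun k _ => by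
        simp only [hv]; ring
    refine Eq.symm ?_
    calc ∑ i, (A *ᵥ v i) ⬝ᵥ (Z *ᵥ v i)
        = ∑ i, ∑ j, ∑ l, ∑ k, A j l * Z j k * (V l i * V k i) :=
          Finset.sum_congr rfl fun i _ => hterm i
      _ = ∑ j, ∑ i, ∑ l, ∑ k, A j l * Z j k * (V l i * V k i) := Finset.sum_comm
      _ = ∑ j, ∑ l, ∑ i, ∑ k, A j l * Z j k * (V l i * V k i) :=
          Finset.sum_congr rfl fun j _ => Finset.sum_comm
      _ = ∑ j, ∑ l, ∑ k, ∑ i, A j l * Z j k * (V l i * V k i) :=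
          Finset.sum_congr rfl fun j _ => Finset.sum_congr rfl fun l _ => Finset.sum_comm
      _ = ∑ j, ∑ l, A j l * Z j l := by
          refine Finset.sum_congr rfl fun j _ => Finset.sum_congr rfl fun l _ => ?_
          calc ∑ k, ∑ i, A j l * Z j k * (V l i * V k i)
              = ∑ k, A j l * Z j k * (∑ i, V l i * V k i) :=
                Finset.sum_congr rfl fun k _ => by rw [Finset.mul_sum]
            _ = ∑ k, A j l * Z j k * (if l = k then (1:ℝ) else 0) :=
                Finset.sum_congr rfl fun k _ => by rw [hdelta]
            _ = A j l * Z j l := by simp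
      _ = minner A Z := rfl
  -- step 2 : per-column bound
  have step2 : ∀ i, (A *ᵥ v i) ⬝ᵥ (Z *ᵥ v i) ≤ specNorm A * singVals Z i := by
    intro i
    have hZnorm : ∑ j, ((Z *ᵥ v i) j) ^ 2 = e i := by
      have h := diag_spec hZ
      rw [quadform, quad_col V (Zᵀ * Z) i, h]
      simp [he]
    have hAnorm : ∑ j, ((A *ᵥ v i) j) ^ 2 ≤ specNorm A ^ 2 :=
      unit_vec_bound A (v i) (hcol_unit i)
    have hCS : ((A *ᵥ v i) ⬝ᵥ (Z *ᵥ v i)) ^ 2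
        ≤ (∑ j, ((A *ᵥ v i) j) ^ 2) * (∑ j, ((Z *ᵥ v i) j) ^ 2) := by
      simpa [dotProduct] using
        Finset.sum_mul_sq_le_sq_mul_sq Finset.univ (A *ᵥ v i) (Z *ᵥ v i)
    have t0 : (A *ᵥ v i) ⬝ᵥ (Z *ᵥ v i)
        ≤ Real.sqrt ((∑ j, ((A *ᵥ v i) j) ^ 2) * (∑ j, ((Z *ᵥ v i) j) ^ 2)) := by
      calc (A *ᵥ v i) ⬝ᵥ (Z *ᵥ v i) ≤ |(A *ᵥ v i) ⬝ᵥ (Z *ᵥ v i)| := le_abs_self _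
        _ = Real.sqrt (((A *ᵥ v i) ⬝ᵥ (Z *ᵥ v i)) ^ 2) := (Real.sqrt_sq_eq_abs _).symm
        _ ≤ _ := Real.sqrt_le_sqrt hCS
    have hx : Real.sqrt (∑ j, ((A *ᵥ v i) j) ^ 2) ≤ specNorm A := by
      calc Real.sqrt (∑ j, ((A *ᵥ v i) j) ^ 2)
          ≤ Real.sqrt (specNorm A ^ 2) := Real.sqrt_le_sqrt hAnorm
        _ = specNorm A := Real.sqrt_sq (specNorm_nonneg A)
    have hy : Real.sqrt (∑ j, ((Z *ᵥ v i) j) ^ 2) = singVals Z i := by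
      rw [hZnorm, he]; rfl
    calc (A *ᵥ v i) ⬝ᵥ (Z *ᵥ v i)
        ≤ Real.sqrt ((∑ j, ((A *ᵥ v i) j) ^ 2) * (∑ j, ((Z *ᵥ v i) j) ^ 2)) := t0
      _ = Real.sqrt (∑ j, ((A *ᵥ v i) j) ^ 2) * Real.sqrt (∑ j, ((Z *ᵥ v i) j) ^ 2) :=
          Real.sqrt_mul (Finset.sum_nonneg fun j _ => sq_nonneg _) _
      _ = Real.sqrt (∑ j, ((A *ᵥ v i) j) ^ 2) * singVals Z i := by rw [hy]
      _ ≤ specNorm A * singVals Z i :=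
          mul_le_mul_of_nonneg_right hx (Real.sqrt_nonneg _)
  calc minner A Z = ∑ i, (A *ᵥ v i) ⬝ᵥ (Z *ᵥ v i) := step1
    _ ≤ ∑ i, specNorm A * singVals Z i := Finset.sum_le_sum fun i _ => step2 i
    _ = specNorm A * nnorm Z := by rw [← Finset.mul_sum]; rfl


lemma nnorm_zero {m n : ℕ} : nnorm (0 : Matrix (Fin m) (Fin n) ℝ) = 0 := by
  have h : ∀ i, (Matrix.isHermitian_transpose_mul_self
      (0 : Matrix (Fin m) (Fin n) ℝ)).eigenvalues i = 0 := by
    intro i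
    have h := diag_spec (Matrix.isHermitian_transpose_mul_self (0 : Matrix (Fin m) (Fin n) ℝ))
    have h2 := congrFun (congrFun h i) i
    simpa using h2.symm
  simp only [nnorm, singVals]
  exact Finset.sum_eq_zero fun i _ => by rw [h i, Real.sqrt_zero]

lemma nnorm_nonneg {m n : ℕ} (Z : Matrix (Fin m) (Fin n) ℝ) : 0 ≤ nnorm Z :=
  Finset.sum_nonneg fun _ _ => Real.sqrt_nonneg _

end SoftImputeAux

/-- if `λ ≥ ‖P_Ω(X)‖₂` then `Z = 0` minimizes `f_λ`. -/
theorem zero_minimizes_for_large_lambda {m n : ℕ} (Ω : Finset (Fin m × Fin n))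
    (X : Matrix (Fin m) (Fin n) ℝ) (lam : ℝ) (hlam : specNorm (pO Ω X) ≤ lam) :
    ∀ Z : Matrix (Fin m) (Fin n) ℝ, fObj Ω X lam 0 ≤ fObj Ω X lam Z := by
  intro Z
  have hz : pO Ω (0 : Matrix (Fin m) (Fin n) ℝ) = 0 := by
    ext i j; simp [pO]
  have hexp : frobSq (pO Ω Z - pO Ω X)
      = frobSq (pO Ω Z) - 2 * minner (pO Ω X) (pO Ω Z) + frobSq (pO Ω X) := by
    simp only [frobSq, minner, Matrix.sub_apply]
    calc ∑ i, ∑ j, (pO Ω Z i j - pO Ω X i j) ^ 2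
        = ∑ i, ∑ j, ((pO Ω Z i j) ^ 2 - 2 * (pO Ω X i j * pO Ω Z i j) + (pO Ω X i j) ^ 2) :=
          Finset.sum_congr rfl fun i _ => Finset.sum_congr rfl fun j _ => by ring
      _ = _ := by
          simp only [Finset.sum_add_distrib, Finset.sum_sub_distrib, ← Finset.mul_sum]
  have hmin : minner (pO Ω X) (pO Ω Z) = minner (pO Ω X) Z := by
    refine Finset.sum_congr rfl fun i _ => Finset.sum_congr rfl fun j _ => ?_
    by_cases h : (i, j) ∈ Ω <;> simp [pO, h]
  have hml : minner (pO Ω X) Z ≤ lam * nnorm Z :=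
    le_trans (holder (pO Ω X) Z) (mul_le_mul_of_nonneg_right hlam (nnorm_nonneg Z))
  have hsq : 0 ≤ frobSq (pO Ω Z) :=
    Finset.sum_nonneg fun i _ => Finset.sum_nonneg fun j _ => sq_nonneg _
  have hzero : frobSq (pO Ω (0 : Matrix (Fin m) (Fin n) ℝ) - pO Ω X) = frobSq (pO Ω X) := by
    rw [hz]
    simp only [frobSq, Matrix.sub_apply, Matrix.zero_apply]
    exact Finset.sum_congr rfl fun i _ => Finset.sum_congr rfl fun j _ => by ring
  simp only [fObj, hzero, nnorm_zero, mul_zero, add_zero, hexp, hmin]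
  linarith
end
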